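/- arXiv:1909.10016 — 2 statements merged into one kernel-verified Lean document; each statement's English description precedes it below -/
import Mathlib

section
/- Let R ≥ 1, let ε be a real with 0 < ε < 1, let n = ⌈2R⌉ + 1, and consider items e₁, …, eₙ₋₁ with s(eᵢ) = i/n + ε/n². Then Σ_{i=1}^{n−1} s(eᵢ) > R, and for every nonempty subset B ⊆ {e₁,…,eₙ₋₁} with s(B) ≤ 1, one has s(B) ≤ 1 − (1−ε)/n. -/
lemma gauss_icc (n : ℕ) (h : 1 ≤ n) :
    (∑ i ∈ Finset.Icc 1 (n-1), i) * 2 = (n-1) * n := by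
  induction n with
  | zero => omega
  | succ m ih =>
    rcases Nat.eq_or_lt_of_le h with h1 | h1
    · simp [← h1]
    · have hm : 1 ≤ m := by omega
      have : m + 1 - 1 = (m-1) + 1 := by omega
      rw [this, Finset.sum_Icc_succ_top (by omega)]
      have := ih hm
      ring_nf
      omega

theorem stmt_14 (R ε : ℝ) (hR : 1 ≤ R) (hε0 : 0 < ε) (hε1 : ε < 1)
    (n : ℕ) (hn : n = ⌈2 * R⌉₊ + 1) :
    (∑ i ∈ Finset.Icc 1 (n - 1), ((i : ℝ) / n + ε / (n : ℝ) ^ 2)) > R ∧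
    ∀ B ⊆ Finset.Icc 1 (n - 1), B.Nonempty →
      (∑ i ∈ B, ((i : ℝ) / n + ε / (n : ℝ) ^ 2)) ≤ 1 →
      (∑ i ∈ B, ((i : ℝ) / n + ε / (n : ℝ) ^ 2)) ≤ 1 - (1 - ε) / n := by
  have hceil : (2 : ℕ) ≤ ⌈2 * R⌉₊ := by
    have h1 : (2:ℝ) ≤ 2 * R := by linarith
    calc (2:ℕ) = ⌈(2:ℝ)⌉₊ := by norm_num
    _ ≤ ⌈2 * R⌉₊ := Nat.ceil_mono h1
  have hn3 : 3 ≤ n := by omega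
  have hnR : (0:ℝ) < n := by positivity
  have hnR3 : (3:ℝ) ≤ n := by exact_mod_cast hn3
  have hceilR : 2 * R ≤ (⌈2 * R⌉₊ : ℝ) := Nat.le_ceil _
  have hcast : ((n - 1 : ℕ) : ℝ) = (n : ℝ) - 1 := by
    have : 1 ≤ n := by omega
    push_cast [this]; ring
  have hnm1 : (n : ℝ) - 1 = (⌈2 * R⌉₊ : ℝ) := by
    rw [hn]; push_cast; ring
  constructor
  · -- first part
    rw [Finset.sum_add_distrib, ← Finset.sum_div, Finset.sum_const,
      Nat.card_Icc, nsmul_eq_mul]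
    have hsum : (∑ i ∈ Finset.Icc 1 (n - 1), (i : ℝ)) = ((n:ℝ)-1) * n / 2 := by
      have h := gauss_icc n (by omega)
      have h2 : ((∑ i ∈ Finset.Icc 1 (n-1), i : ℕ) : ℝ) * 2 = ((n-1:ℕ):ℝ) * n := by
        exact_mod_cast congrArg (Nat.cast : ℕ → ℝ) h
      rw [Nat.cast_sum] at h2
      rw [hcast] at h2
      linarith
    rw [hsum]
    have hc2 : n - 1 + 1 - 1 = n - 1 := by omega
    rw [hc2, hcast]
    have h1 : ((n:ℝ)-1)*n/2/n = ((n:ℝ)-1)/2 := by field_simp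
    rw [h1]
    have hpos : 0 < ((n:ℝ)-1)*(ε/(n:ℝ)^2) := by
      apply mul_pos (by linarith) (by positivity)
    linarith
  · intro B hB hBne hS1
    have hrw : (∑ i ∈ B, ((i : ℝ) / n + ε / (n : ℝ) ^ 2)) =
        ((∑ i ∈ B, i : ℕ) : ℝ) / n + (B.card : ℝ) * (ε / (n:ℝ)^2) := by
      rw [Finset.sum_add_distrib, ← Finset.sum_div, Finset.sum_const,
        Nat.cast_sum, nsmul_eq_mul]
    set k := ∑ i ∈ B, i with hk
    have hcard : (B.card : ℝ) ≤ (n : ℝ) := by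
      have h1 : B.card ≤ (Finset.Icc 1 (n-1)).card := Finset.card_le_card hB
      have h2 : (Finset.Icc 1 (n-1)).card = n - 1 + 1 - 1 := by rw [Nat.card_Icc]
      have : B.card ≤ n := by omega
      exact_mod_cast this
    have hcard1 : 1 ≤ B.card := Finset.card_pos.mpr hBne
    have hklt : (k : ℝ) < n := by
      rw [hrw] at hS1
      have hc1 : (1:ℝ) ≤ (B.card : ℝ) := by exact_mod_cast hcard1
      have hpos : (0:ℝ) < ε / (n:ℝ)^2 := by positivity
      have hd : (k : ℝ) / n < 1 := by nlinarith
      calc (k:ℝ) = (k:ℝ)/n * n := by field_simp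
      _ < 1 * n := mul_lt_mul_of_pos_right hd hnR
      _ = n := by ring
    have hkle : (k : ℝ) ≤ (n : ℝ) - 1 := by
      have h1 : k < n := by exact_mod_cast hklt
      have h2 : k ≤ n - 1 := by omega
      have h3 : ((k:ℕ):ℝ) ≤ ((n-1:ℕ):ℝ) := by exact_mod_cast h2
      rw [hcast] at h3; exact h3
    rw [hrw]
    have hA : (k:ℝ)/n ≤ ((n:ℝ)-1)/n := div_le_div_of_nonneg_right hkle (le_of_lt hnR)
    have hBc : (B.card:ℝ) * (ε/(n:ℝ)^2) ≤ ε/n := by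
      have h1 : (B.card:ℝ) * (ε/(n:ℝ)^2) ≤ (n:ℝ) * (ε/(n:ℝ)^2) :=
        mul_le_mul_of_nonneg_right hcard (by positivity)
      have h2 : (n:ℝ) * (ε/(n:ℝ)^2) = ε/n := by field_simp
      linarith
    have heq : ((n:ℝ)-1)/n + ε/n = 1 - (1-ε)/n := by field_simp; ring
    linarith
end

section
/- Let f₁, …, f_n be items with sizes in (0,1] and values ≥ 0, sorted in non-increasing density order, and let k satisfy Σ_{i=1}^k s(fᵢ) ≤ 1 < Σ_{i=1}^{k+1} s(fᵢ). Then the optimal knapsack value OPT = max{v(X) : X ⊆ {f₁,…,f_n}, s(X) ≤ 1} satisfies OPT ≤ Σ_{i=1}^k v(fᵢ) + v(f_{k+1}) ≤ 2·max{Σ_{i=1}^k v(fᵢ), v(f_{k+1})}. -/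
theorem stmt_19 (n k : ℕ) (hk : k + 1 ≤ n) (s v : ℕ → ℝ)
    (hs : ∀ i ∈ Finset.Icc 1 n, 0 < s i ∧ s i ≤ 1)
    (hv : ∀ i ∈ Finset.Icc 1 n, 0 ≤ v i)
    (hsort : ∀ i ∈ Finset.Icc 1 n, ∀ j ∈ Finset.Icc 1 n, i ≤ j → v j / s j ≤ v i / s i)
    (hsum1 : ∑ i ∈ Finset.Icc 1 k, s i ≤ 1)
    (hsum2 : 1 < ∑ i ∈ Finset.Icc 1 (k + 1), s i) :
    (∀ X ⊆ Finset.Icc 1 n, ∑ i ∈ X, s i ≤ 1 →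
      ∑ i ∈ X, v i ≤ (∑ i ∈ Finset.Icc 1 k, v i) + v (k + 1)) ∧
    (∑ i ∈ Finset.Icc 1 k, v i) + v (k + 1) ≤
      2 * max (∑ i ∈ Finset.Icc 1 k, v i) (v (k + 1)) := by
  have hk1 : k + 1 ∈ Finset.Icc 1 n := by simp [Finset.mem_Icc]; omega
  have hsk : 0 < s (k + 1) := (hs _ hk1).1
  set d : ℝ := v (k + 1) / s (k + 1) with hd
  have hd0 : 0 ≤ d := div_nonneg (hv _ hk1) hsk.le
  set G : Finset ℕ := Finset.Icc 1 (k + 1) with hG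
  have hGn : G ⊆ Finset.Icc 1 n := Finset.Icc_subset_Icc_right (by omega)
  have hGsum : ∑ i ∈ G, v i = (∑ i ∈ Finset.Icc 1 k, v i) + v (k + 1) := by
    rw [hG, Finset.sum_Icc_succ_top (by omega : 1 ≤ k + 1)]
  constructor
  · intro X hX hXs
    rw [← hGsum]
    have e1 : ∑ i ∈ X ∩ G, v i + ∑ i ∈ X \ G, v i = ∑ i ∈ X, v i :=
      Finset.sum_inter_add_sum_sdiff X G v
    have e2 : ∑ i ∈ X ∩ G, v i + ∑ i ∈ G \ X, v i = ∑ i ∈ G, v i := by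
      rw [Finset.inter_comm]; exact Finset.sum_inter_add_sum_sdiff G X v
    have e3 : ∑ i ∈ X ∩ G, s i + ∑ i ∈ X \ G, s i = ∑ i ∈ X, s i :=
      Finset.sum_inter_add_sum_sdiff X G s
    have e4 : ∑ i ∈ X ∩ G, s i + ∑ i ∈ G \ X, s i = ∑ i ∈ G, s i := by
      rw [Finset.inter_comm]; exact Finset.sum_inter_add_sum_sdiff G X s
    have hA : ∑ i ∈ X \ G, v i ≤ d * ∑ i ∈ X \ G, s i := by
      rw [Finset.mul_sum]
      apply Finset.sum_le_sum
      intro i hi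
      have hiX := Finset.mem_sdiff.mp hi
      have hin : i ∈ Finset.Icc 1 n := hX hiX.1
      have hik : k + 1 ≤ i := by
        have := hiX.2
        simp [hG, Finset.mem_Icc] at this ⊢
        have h1 : 1 ≤ i := (Finset.mem_Icc.mp hin).1
        omega
      have := hsort (k + 1) hk1 i hin hik
      have hsi : 0 < s i := (hs _ hin).1
      calc v i = (v i / s i) * s i := by field_simp
        _ ≤ d * s i := mul_le_mul_of_nonneg_right this hsi.le
    have hB : d * ∑ i ∈ G \ X, s i ≤ ∑ i ∈ G \ X, v i := by
      rw [Finset.mul_sum]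
      apply Finset.sum_le_sum
      intro i hi
      have hiG := (Finset.mem_sdiff.mp hi).1
      have hin : i ∈ Finset.Icc 1 n := hGn hiG
      have hik : i ≤ k + 1 := (Finset.mem_Icc.mp hiG).2
      have := hsort i hin (k + 1) hk1 hik
      have hsi : 0 < s i := (hs _ hin).1
      calc d * s i ≤ (v i / s i) * s i := mul_le_mul_of_nonneg_right this hsi.le
        _ = v i := by field_simp
    have hGs : 1 < ∑ i ∈ G, s i := hsum2
    have key : d * (∑ i ∈ X \ G, s i) ≤ d * (∑ i ∈ G \ X, s i) := by
      apply mul_le_mul_of_nonneg_left _ hd0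
      linarith
    linarith
  · have h1 := le_max_left (∑ i ∈ Finset.Icc 1 k, v i) (v (k + 1))
    have h2 := le_max_right (∑ i ∈ Finset.Icc 1 k, v i) (v (k + 1))
    linarith
end
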